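/- For a prime p ≥ 5, the number of equivalence classes up to rotation of Hamiltonian cycles on Z/p with no axis of reflective symmetry equals [ (p-1)^2 + (p-1)! − p·(p-1)·2^((p-3)/2)·((p-3)/2)! ] / (2p). -/

import Mathlib

open Equiv
set_option linter.unusedSectionVars false

variable (p : ℕ) [NeZero p]

/-- `σ` is a (directed) Hamiltonian cycle on the `p` vertices `ZMod p`:
a single cycle whose support is everything. -/
def IsHC (σ : Perm (ZMod p)) : Prop := σ.IsCycle ∧ σ.support = Finset.univ

/-- The type of directed Hamiltonian cycles on `ZMod p`. -/
def HC := {σ : Perm (ZMod p) // IsHC p σ}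

/-- Rotation `k ↦ r + k`. -/
def rot (r : ZMod p) : Perm (ZMod p) := Equiv.addLeft r

/-- Reflection `k ↦ s - k`. -/
def reflAt (s : ZMod p) : Perm (ZMod p) := Equiv.subLeft s

/-- `g` fixes the *undirected* cycle underlying `σ` (conjugation can reverse orientation). -/
def FixedBy (g σ : Perm (ZMod p)) : Prop := g * σ * g⁻¹ = σ ∨ g * σ * g⁻¹ = σ⁻¹

lemma rot_zero : rot p 0 = 1 := by ext x; simp [rot]

lemma rot_neg (r : ZMod p) : rot p (-r) = (rot p r)⁻¹ := by
  ext x; simp [rot, neg_add_eq_sub, eq_sub_iff_add_eq]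

lemma rot_add (r s : ZMod p) : rot p (r + s) = rot p r * rot p s := by
  ext x; simp [rot, add_assoc]

/-- The action of a rotation on a cycle, by conjugation. -/
def rotAct (r : ZMod p) (σ : Perm (ZMod p)) : Perm (ZMod p) := rot p r * σ * (rot p r)⁻¹

lemma rotAct_zero (σ : Perm (ZMod p)) : rotAct p 0 σ = σ := by
  simp [rotAct, rot_zero]

lemma rotAct_inv (r : ZMod p) (σ : Perm (ZMod p)) :
    (rotAct p r σ)⁻¹ = rotAct p r σ⁻¹ := by
  simp [rotAct, mul_inv_rev, mul_assoc]

lemma rotAct_rotAct (r s : ZMod p) (σ : Perm (ZMod p)) :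
    rotAct p r (rotAct p s σ) = rotAct p (r + s) σ := by
  simp [rotAct, rot_add, mul_inv_rev, mul_assoc]

lemma rotAct_neg_cancel (r : ZMod p) (σ : Perm (ZMod p)) :
    rotAct p (-r) (rotAct p r σ) = σ := by
  rw [rotAct_rotAct, neg_add_cancel, rotAct_zero]

/-- Setoid identifying a directed cycle with its reversal: undirected cycles. -/
def revSetoid : Setoid (HC p) where
  r σ τ := τ.1 = σ.1 ∨ τ.1 = σ.1⁻¹
  iseqv := by
    constructor
    · exact fun a => Or.inl rfl
    · rintro a b (h | h)
      · exact Or.inl h.symm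
      · right; rw [h, inv_inv]
    · rintro a b c (h1 | h1) (h2 | h2) <;> rw [h2, h1] <;> simp
/-- Undirected Hamiltonian cycles. -/
def UCyc := Quotient (revSetoid p)

/-- Setoid identifying cycles up to rotation and reversal: the equivalence classes
of undirected cycles under rotation. -/
def rotSetoid : Setoid (HC p) where
  r σ τ := ∃ r : ZMod p, τ.1 = rotAct p r σ.1 ∨ τ.1 = (rotAct p r σ.1)⁻¹
  iseqv := by
    constructor
    · exact fun a => ⟨0, Or.inl (by rw [rotAct_zero])⟩
    · rintro a b ⟨r, h | h⟩ <;> refine ⟨-r, ?_⟩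
      · left; rw [h, rotAct_neg_cancel]
      · right; rw [h, rotAct_inv, inv_inv, rotAct_neg_cancel]
    · rintro a b c ⟨r, h1 | h1⟩ ⟨s, h2 | h2⟩ <;> refine ⟨s + r, ?_⟩ <;>
        rw [h2, h1] <;>
        simp [rotAct_inv, rotAct_rotAct]
/-- Rotation classes of undirected Hamiltonian cycles. -/
def RotClasses := Quotient (rotSetoid p)

section Part1

variable {p : ℕ} [NeZero p]

lemma reflAt_apply (s x : ZMod p) : reflAt p s x = s - x := rfl

lemma rot_apply (r x : ZMod p) : rot p r x = r + x := rfl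

lemma reflAt_mul_self (s : ZMod p) : reflAt p s * reflAt p s = 1 := by
  ext x; simp [reflAt]

lemma reflAt_inv (s : ZMod p) : (reflAt p s)⁻¹ = reflAt p s := by
  rw [inv_eq_iff_mul_eq_one, reflAt_mul_self]

lemma reflAt_conj_rot (s r : ZMod p) :
    reflAt p s * rot p r * (reflAt p s)⁻¹ = rot p (-r) := by
  rw [reflAt_inv]; ext x
  simp only [Equiv.Perm.mul_apply, reflAt_apply, rot_apply]
  ring

lemma rot_conj_reflAt (r t : ZMod p) :
    rot p r * reflAt p t * (rot p r)⁻¹ = reflAt p (t + 2*r) := by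
  rw [← rot_neg]; ext x
  simp only [Equiv.Perm.mul_apply, reflAt_apply, rot_apply]
  ring

lemma rot_injective : Function.Injective (rot p) := by
  intro a b h
  have := congrArg (fun f : Equiv.Perm (ZMod p) => f 0) h
  simpa [rot_apply] using this

/-- centralizer: a permutation commuting with a nontrivial rotation is a rotation. -/
lemma eq_rot_of_commute [Fact p.Prime] {σ : Equiv.Perm (ZMod p)} {r : ZMod p} (hr : r ≠ 0)
    (h : rot p r * σ = σ * rot p r) : σ = rot p (σ 0) := by
  have key : ∀ n : ℕ, ∀ x, σ ((n : ZMod p) * r + x) = (n : ZMod p) * r + σ x := by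
    intro n
    induction n with
    | zero => simp
    | succ n ih =>
      intro x
      have hcomm : ∀ z, σ (r + z) = r + σ z := by
        intro z
        have := congrArg (fun f : Equiv.Perm (ZMod p) => f z) h
        simpa [rot_apply] using this.symm
      push_cast
      calc σ ((n + 1 : ZMod p) * r + x) = σ (r + ((n : ZMod p) * r + x)) := by ring_nf
        _ = r + σ ((n : ZMod p) * r + x) := hcomm _
        _ = (n + 1 : ZMod p) * r + σ x := by rw [ih]; ring
  ext y
  have := key (y * r⁻¹).val 0
  rw [ZMod.natCast_zmod_val] at this
  have hy : y * r⁻¹ * r = y := by field_simp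
  rw [add_zero, hy] at this
  rw [rot_apply, this, add_comm]

end Part1
section Part2

open Equiv.Perm

variable {p : ℕ} [NeZero p]

lemma hcTwoNeZero [Fact p.Prime] (hp5 : 5 ≤ p) : (2 : ZMod p) ≠ 0 := by
  intro hh
  rw [show (2 : ZMod p) = ((2 : ℕ) : ZMod p) from by norm_cast,
    ZMod.natCast_eq_zero_iff] at hh
  have := Nat.le_of_dvd two_pos hh
  omega

lemma rot_conj_cancel (a b : ZMod p) : rot p a * rot p b * (rot p a)⁻¹ = rot p b := by
  rw [← rot_add, ← rot_neg, ← rot_add]; congr 1; ring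

lemma rot_pow_apply (r x : ZMod p) (n : ℕ) : (rot p r ^ n) x = (n : ZMod p) * r + x := by
  induction n with
  | zero => simp
  | succ n ih => rw [pow_succ', Equiv.Perm.mul_apply, ih, rot_apply]; push_cast; ring

lemma isHC_rot [Fact p.Prime] {r : ZMod p} (hr : r ≠ 0) : IsHC p (rot p r) := by
  have hfix : ∀ y : ZMod p, rot p r y ≠ y := by
    intro y hy
    rw [rot_apply, add_eq_right] at hy
    exact hr hy
  constructor
  · refine ⟨0, hfix 0, fun y _ => ?_⟩
    refine ⟨((y * r⁻¹).val : ℤ), ?_⟩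
    rw [zpow_natCast, rot_pow_apply, ZMod.natCast_zmod_val, add_zero]
    field_simp
  · ext x
    simp only [Equiv.Perm.mem_support, Finset.mem_univ, iff_true]
    exact hfix x

lemma IsHC.orderOf_eq {σ : Equiv.Perm (ZMod p)} (h : IsHC p σ) : orderOf σ = p := by
  rw [h.1.orderOf, h.2, Finset.card_univ, ZMod.card]

lemma IsHC.ne_inv {σ : Equiv.Perm (ZMod p)} (hp5 : 5 ≤ p)
    (h : IsHC p σ) : σ ≠ σ⁻¹ := by
  intro he
  have h2 : σ * σ = 1 := by nth_rewrite 2 [he]; simp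
  have hd : orderOf σ ∣ 2 := orderOf_dvd_of_pow_eq_one (by rw [pow_two]; exact h2)
  rw [h.orderOf_eq] at hd
  have := Nat.le_of_dvd two_pos hd
  omega

lemma IsHC.conj {σ : Equiv.Perm (ZMod p)} (h : IsHC p σ) (c : Equiv.Perm (ZMod p)) :
    IsHC p (c * σ * c⁻¹) := by
  refine ⟨h.1.conj, ?_⟩
  ext x
  simp only [Equiv.Perm.mem_support, Finset.mem_univ, iff_true]
  intro hx
  simp only [Equiv.Perm.mul_apply] at hx
  have hx2 : σ (c⁻¹ x) = c⁻¹ x := by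
    have := congrArg (⇑c⁻¹) hx
    simpa using this
  have h2 : c⁻¹ x ∈ σ.support := h.2 ▸ Finset.mem_univ _
  exact (Equiv.Perm.mem_support.1 h2) hx2

lemma IsHC.inv {σ : Equiv.Perm (ZMod p)} (h : IsHC p σ) : IsHC p σ⁻¹ :=
  ⟨h.1.inv, by rw [Equiv.Perm.support_inv, h.2]⟩

lemma isHC_rotAct {σ : Equiv.Perm (ZMod p)} (h : IsHC p σ) (r : ZMod p) :
    IsHC p (rotAct p r σ) := h.conj _

/-- a rotation cannot reverse a Hamiltonian cycle -/
lemma no_rot_reversal [Fact p.Prime] {σ : Equiv.Perm (ZMod p)} (hp5 : 5 ≤ p)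
    (h : IsHC p σ) (r : ZMod p) : rotAct p r σ ≠ σ⁻¹ := by
  intro hrev
  have h2 : (2 : ZMod p) ≠ 0 := hcTwoNeZero hp5
  unfold rotAct at hrev
  have hconj2 : rot p (r + r) * σ * (rot p (r + r))⁻¹ = σ := by
    have h1 : rot p r * σ⁻¹ * (rot p r)⁻¹ = σ := by
      have := congrArg (·⁻¹) hrev
      simpa [mul_inv_rev, mul_assoc] using this
    rw [rot_add]
    calc rot p r * rot p r * σ * (rot p r * rot p r)⁻¹
        = rot p r * (rot p r * σ * (rot p r)⁻¹) * (rot p r)⁻¹ := by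
          simp [mul_assoc, mul_inv_rev]
      _ = σ := by rw [hrev, h1]
  by_cases hr : r + r = 0
  · have hr0 : r = 0 := by
      have h22 : (2 : ZMod p) * r = 0 := by rw [two_mul]; exact hr
      rcases mul_eq_zero.1 h22 with h' | h'
      · exact absurd h' h2
      · exact h'
    rw [hr0, rot_zero] at hrev
    simp at hrev
    exact h.ne_inv hp5 hrev
  · have hcom : rot p (r + r) * σ = σ * rot p (r + r) := by
      have := congrArg (· * rot p (r + r)) hconj2
      simpa [mul_assoc] using this
    have hσ : σ = rot p (σ 0) := eq_rot_of_commute hr hcom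
    have hfix : rot p r * σ * (rot p r)⁻¹ = σ := by
      rw [hσ]; exact rot_conj_cancel _ _
    rw [hfix] at hrev
    exact h.ne_inv hp5 hrev

/-- a reflection cannot preserve (orientation-wise) a Hamiltonian cycle -/
lemma no_refl_commute [Fact p.Prime] {σ : Equiv.Perm (ZMod p)} (hp5 : 5 ≤ p)
    (h : IsHC p σ) (s : ZMod p) : reflAt p s * σ * (reflAt p s)⁻¹ ≠ σ := by
  intro hcom
  have h2 : (2 : ZMod p) ≠ 0 := hcTwoNeZero hp5
  set x₀ : ZMod p := 2⁻¹ * s with hx₀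
  have hfix : reflAt p s x₀ = x₀ := by
    rw [reflAt_apply, hx₀]
    field_simp
    ring
  have huniq : ∀ y, reflAt p s y = y → y = x₀ := by
    intro y hy
    rw [reflAt_apply, sub_eq_iff_eq_add] at hy
    have hs : s = 2 * y := by rw [hy]; ring
    rw [hx₀, hs]
    field_simp
  have hgs : reflAt p s (σ x₀) = σ x₀ := by
    have hh := congrArg (fun f : Equiv.Perm (ZMod p) => f x₀) hcom
    simp only [Equiv.Perm.mul_apply, reflAt_inv] at hh
    rw [hfix] at hh
    exact hh
  have hfx : σ x₀ = x₀ := huniq _ hgs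
  have hsup : x₀ ∈ σ.support := h.2 ▸ Finset.mem_univ _
  exact (Equiv.Perm.mem_support.1 hsup) hfx

end Part2
section Part3

open Equiv Equiv.Perm

variable {p : ℕ} [NeZero p] [Fact p.Prime]

lemma hc_pow_zero_inj {σ : Perm (ZMod p)} (h : IsHC p σ) :
    Function.Injective (fun i : ZMod p => (σ ^ i.val) 0) := by
  have hz : σ 0 ≠ 0 := by
    have : (0 : ZMod p) ∈ σ.support := h.2 ▸ Finset.mem_univ _
    exact Equiv.Perm.mem_support.1 this
  have key : ∀ a b : ℕ, a ≤ b → b < p → (σ ^ a) 0 = (σ ^ b) 0 → a = b := by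
    intro a b hab hbp he
    have hsum : σ ^ b = σ ^ a * σ ^ (b - a) := by
      rw [← pow_add]; congr 1; omega
    rw [hsum, Equiv.Perm.mul_apply] at he
    have h0 : (σ ^ (b - a)) 0 = 0 := (σ ^ a).injective he.symm
    have h1 : σ ^ (b - a) = 1 := (h.1.pow_eq_one_iff' hz).2 h0
    have hd : p ∣ (b - a) := by
      rw [← h.orderOf_eq]; exact orderOf_dvd_of_pow_eq_one h1
    rcases Nat.eq_zero_of_dvd_of_lt hd (by omega) with h'
    · omega
  intro i j hij
  simp only at hij
  have hi := ZMod.val_lt i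
  have hj := ZMod.val_lt j
  have : i.val = j.val := by
    rcases le_total i.val j.val with hle | hle
    · exact key _ _ hle hj hij
    · exact (key _ _ hle hi hij.symm).symm
  calc i = ((i.val : ℕ) : ZMod p) := (ZMod.natCast_zmod_val i).symm
    _ = ((j.val : ℕ) : ZMod p) := by rw [this]
    _ = j := ZMod.natCast_zmod_val j

/-- the base-point parametrization of a Hamiltonian cycle -/
noncomputable def toBase (σ : Perm (ZMod p)) (h : IsHC p σ) : Perm (ZMod p) :=
  Equiv.ofBijective _ (Finite.injective_iff_bijective.1 (hc_pow_zero_inj h))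

lemma toBase_apply {σ : Perm (ZMod p)} (h : IsHC p σ) (i : ZMod p) :
    toBase σ h i = (σ ^ i.val) 0 := rfl

lemma toBase_zero {σ : Perm (ZMod p)} (h : IsHC p σ) : toBase σ h 0 = 0 := by
  rw [toBase_apply, ZMod.val_zero, pow_zero, Equiv.Perm.one_apply]

lemma toBase_succ {σ : Perm (ZMod p)} (h : IsHC p σ) (i : ZMod p) :
    toBase σ h (i + 1) = σ (toBase σ h i) := by
  rw [toBase_apply, toBase_apply]
  have h1 : σ ^ ((i + 1 : ZMod p).val) = σ ^ (i.val + 1) := by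
    rw [pow_eq_pow_iff_modEq, h.orderOf_eq]
    have : (i + 1 : ZMod p).val = (i.val + (1 : ZMod p).val) % p := ZMod.val_add i 1
    rw [this, ZMod.val_one p]
    exact Nat.mod_modEq _ p
  rw [h1, pow_succ', Equiv.Perm.mul_apply]

lemma toBase_conj {σ : Perm (ZMod p)} (h : IsHC p σ) :
    toBase σ h * rot p 1 * (toBase σ h)⁻¹ = σ := by
  ext x
  simp only [Equiv.Perm.mul_apply, rot_apply]
  rw [add_comm, toBase_succ h]
  simp

lemma one_ne_zero_zmod : (1 : ZMod p) ≠ 0 := one_ne_zero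

/-- the parametrization equivalence -/
noncomputable def hcParam : HC p ≃ {f : Perm (ZMod p) // f 0 = 0} where
  toFun σ := ⟨toBase σ.1 σ.2, toBase_zero σ.2⟩
  invFun f := ⟨f.1 * rot p 1 * f.1⁻¹, (isHC_rot one_ne_zero_zmod).conj f.1⟩
  left_inv σ := Subtype.ext (toBase_conj σ.2)
  right_inv f := by
    refine Subtype.ext (Equiv.ext fun i => ?_)
    rw [toBase_apply, conj_pow]
    simp only [Equiv.Perm.mul_apply]
    have h0 : (f.1)⁻¹ 0 = 0 := by
      apply f.1.injective
      simp [f.2]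
    rw [h0, rot_pow_apply, mul_one, add_zero, ZMod.natCast_zmod_val]

end Part3
section Part4

open Equiv Equiv.Perm

variable {p : ℕ} [NeZero p] [Fact p.Prime]

/-- decompose a permutation as rotation times a 0-fixing permutation -/
def permDecomp : Perm (ZMod p) ≃ ZMod p × {f : Perm (ZMod p) // f 0 = 0} where
  toFun f := ⟨f 0, ⟨rot p (-(f 0)) * f, by simp [Equiv.Perm.mul_apply, rot_apply]⟩⟩
  invFun x := rot p x.1 * x.2.1
  left_inv f := by
    simp only [← mul_assoc, ← rot_add, add_neg_cancel, rot_zero, one_mul]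
  right_inv x := by
    obtain ⟨r, g, hg⟩ := x
    have h0 : (rot p r * g) 0 = r := by simp [Equiv.Perm.mul_apply, rot_apply, hg]
    refine Prod.ext h0 (Subtype.ext ?_)
    simp only [h0, ← mul_assoc, ← rot_add, neg_add_cancel, rot_zero, one_mul]

lemma card_stab : Nat.card {f : Perm (ZMod p) // f 0 = 0} = (p - 1).factorial := by
  have hp1 : 1 ≤ p := (Fact.out : p.Prime).one_lt.le
  obtain ⟨q, hq⟩ : ∃ q, p = q + 1 := ⟨p - 1, by omega⟩
  have h1 : Nat.card (Perm (ZMod p)) = p.factorial := by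
    rw [Nat.card_eq_fintype_card, Fintype.card_perm, ZMod.card]
  have h2 : Nat.card (Perm (ZMod p)) =
      p * Nat.card {f : Perm (ZMod p) // f 0 = 0} := by
    rw [Nat.card_congr (permDecomp (p := p)), Nat.card_prod, Nat.card_eq_fintype_card,
      ZMod.card]
  have h3 : p.factorial = p * (p - 1).factorial := by
    rw [hq]; simp [Nat.factorial_succ]
  rw [h1, h3] at h2
  exact (Nat.eq_of_mul_eq_mul_left (by omega) h2.symm)

lemma card_hc : Nat.card (HC p) = (p - 1).factorial := by
  rw [Nat.card_congr (hcParam (p := p)), card_stab]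

/-- oddness correspondence: the conjugated cycle is reversed by `reflAt 0` iff the
parametrizing permutation commutes with negation. -/
lemma refl_zero_reverses_iff (hp5 : 5 ≤ p) {f : Perm (ZMod p)} (hf : f 0 = 0) :
    (reflAt p 0) * (f * rot p 1 * f⁻¹) * (reflAt p 0)⁻¹ = (f * rot p 1 * f⁻¹)⁻¹
      ↔ reflAt p 0 * f = f * reflAt p 0 := by
  set g : Perm (ZMod p) := reflAt p 0 with hg
  have hginv : g⁻¹ = g := reflAt_inv 0
  have hg0 : g 0 = 0 := by simp [hg, reflAt_apply]
  constructor
  · intro h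
    have h' : (g * f) * rot p 1 * (g * f)⁻¹ = (f * g) * rot p 1 * (f * g)⁻¹ := by
      calc (g * f) * rot p 1 * (g * f)⁻¹ = g * (f * rot p 1 * f⁻¹) * g⁻¹ := by
            simp [mul_assoc, mul_inv_rev, hginv]
        _ = (f * rot p 1 * f⁻¹)⁻¹ := h
        _ = f * (rot p 1)⁻¹ * f⁻¹ := by simp [mul_inv_rev, mul_assoc]
        _ = f * (g * rot p 1 * g⁻¹) * f⁻¹ := by rw [hg, reflAt_conj_rot, rot_neg]
        _ = (f * g) * rot p 1 * (f * g)⁻¹ := by simp [mul_assoc, mul_inv_rev, hginv]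
    set h₀ : Perm (ZMod p) := (f * g)⁻¹ * (g * f) with hh
    have hcomm : rot p 1 * h₀ = h₀ * rot p 1 := by
      have := h'
      -- rearrange: rot1 * h₀ = h₀ * rot1
      have e1 : (f * g)⁻¹ * ((g * f) * rot p 1 * (g * f)⁻¹) * (g*f) = (f*g)⁻¹ * ((f * g) * rot p 1 * (f * g)⁻¹) * (g*f) := by rw [this]
      calc rot p 1 * h₀ = (f*g)⁻¹ * ((f * g) * rot p 1 * (f * g)⁻¹) * (g*f) := by
            rw [hh]; group
        _ = (f * g)⁻¹ * ((g * f) * rot p 1 * (g * f)⁻¹) * (g*f) := e1.symm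
        _ = h₀ * rot p 1 := by rw [hh]; group
    have h₀rot : h₀ = rot p (h₀ 0) := eq_rot_of_commute one_ne_zero_zmod hcomm
    have hfi : f⁻¹ 0 = 0 := by apply f.injective; simp [hf]
    have h₀0 : h₀ 0 = 0 := by
      simp only [hh, Equiv.Perm.mul_apply, mul_inv_rev, hginv]
      rw [hf, hg0, hfi, hg0]
    rw [h₀0, rot_zero] at h₀rot
    have : g * f = f * g := by
      have := congrArg (fun z => (f * g) * z) h₀rot
      simpa [hh, mul_assoc] using this
    exact this
  · intro h
    calc g * (f * rot p 1 * f⁻¹) * g⁻¹ = (g * f) * rot p 1 * (g * f)⁻¹ := by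
          simp [mul_assoc, mul_inv_rev, hginv]
      _ = (f * g) * rot p 1 * (f * g)⁻¹ := by rw [h]
      _ = f * (g * rot p 1 * g⁻¹) * f⁻¹ := by simp [mul_assoc, mul_inv_rev, hginv]
      _ = f * (rot p 1)⁻¹ * f⁻¹ := by rw [hg, reflAt_conj_rot, rot_neg]
      _ = (f * rot p 1 * f⁻¹)⁻¹ := by simp [mul_inv_rev, mul_assoc]

end Part4
section Part5

open Equiv Equiv.Perm

variable {p : ℕ} [NeZero p] [Fact p.Prime] {m : ℕ}

/-- the embedding of `Fin m` as `{1, ..., m}` in `ZMod p` -/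
def embF (i : Fin m) : ZMod p := ((i : ℕ) + 1 : ℕ)

/-- the index of the pair `{x, -x}` -/
def idxF (hm : p = 2 * m + 1) (hm2 : 2 ≤ m) (x : ZMod p) : Fin m :=
  ⟨min x.val (p - x.val) - 1, by
    have := ZMod.val_lt x
    omega⟩

section PairLemmas

variable (hm : p = 2 * m + 1) (hm2 : 2 ≤ m)
include hm hm2

lemma embF_val (i : Fin m) : (embF (p := p) i).val = (i : ℕ) + 1 := by
  apply ZMod.val_cast_of_lt
  have := i.2
  omega

lemma embF_ne_zero (i : Fin m) : embF (p := p) i ≠ 0 := by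
  intro h
  have := embF_val (p := p) hm hm2 i
  rw [h, ZMod.val_zero] at this
  omega

lemma val_pos_of_ne_zero {x : ZMod p} (hx : x ≠ 0) : 1 ≤ x.val := by
  rcases Nat.eq_zero_or_pos x.val with h | h
  · exfalso; apply hx
    have := ZMod.natCast_zmod_val x
    rw [← this, h, Nat.cast_zero]
  · exact h

lemma neg_val_of_ne_zero {x : ZMod p} (hx : x ≠ 0) : (-x).val = p - x.val := by
  rw [ZMod.neg_val, if_neg hx]

lemma idxF_neg {x : ZMod p} (hx : x ≠ 0) :
    idxF hm hm2 (-x) = idxF hm hm2 x := by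
  have h1 := neg_val_of_ne_zero hm hm2 hx
  have h2 := ZMod.val_lt x
  have h3 := val_pos_of_ne_zero hm hm2 hx
  apply Fin.ext
  simp only [idxF, h1]
  congr 1
  omega

lemma idxF_embF (i : Fin m) : idxF hm hm2 (embF i) = i := by
  apply Fin.ext
  have h1 := embF_val (p := p) hm hm2 i
  have h2 := i.2
  simp only [idxF, h1]
  omega

lemma repr_pos {x : ZMod p} (hx : x ≠ 0) (hs : x.val ≤ m) :
    embF (idxF hm hm2 x) = x := by
  apply ZMod.val_injective
  rw [embF_val (p := p) hm hm2]
  have h3 := val_pos_of_ne_zero hm hm2 hx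
  simp only [idxF]
  have h2 := ZMod.val_lt x
  omega

lemma repr_neg {x : ZMod p} (hx : x ≠ 0) (hs : ¬ x.val ≤ m) :
    embF (idxF hm hm2 x) = -x := by
  apply ZMod.val_injective
  rw [embF_val (p := p) hm hm2, neg_val_of_ne_zero hm hm2 hx]
  have h3 := val_pos_of_ne_zero hm hm2 hx
  simp only [idxF]
  have h2 := ZMod.val_lt x
  omega

lemma sgn_neg {x : ZMod p} (hx : x ≠ 0) : ((-x).val ≤ m ↔ ¬ (x.val ≤ m)) := by
  rw [neg_val_of_ne_zero hm hm2 hx]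
  have h2 := ZMod.val_lt x
  have h3 := val_pos_of_ne_zero hm hm2 hx
  omega

lemma sgn_embF (i : Fin m) : (embF (p := p) i).val ≤ m := by
  rw [embF_val (p := p) hm hm2]
  have := i.2
  omega

/-- representation: every nonzero x is ± embF (idxF x) -/
lemma repr_cases {x : ZMod p} (hx : x ≠ 0) :
    x = embF (idxF hm hm2 x) ∨ x = -embF (idxF hm hm2 x) := by
  by_cases hs : x.val ≤ m
  · left; rw [repr_pos hm hm2 hx hs]
  · right; rw [repr_neg hm hm2 hx hs, neg_neg]

end PairLemmas

end Part5
section Part6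

open Equiv Equiv.Perm

variable {p : ℕ} [NeZero p] [Fact p.Prime] {m : ℕ}

/-- forward function of the signed-pair parametrization -/
def mkFun (hm : p = 2 * m + 1) (hm2 : 2 ≤ m) (π : Perm (Fin m)) (ε : Fin m → Bool)
    (x : ZMod p) : ZMod p :=
  if _ : x = 0 then 0 else
    cond ((decide (x.val ≤ m)) == ε (idxF hm hm2 x))
      (embF (π (idxF hm hm2 x))) (-embF (π (idxF hm hm2 x)))

variable (hm : p = 2 * m + 1) (hm2 : 2 ≤ m)

lemma mkFun_zero (π : Perm (Fin m)) (ε : Fin m → Bool) : mkFun hm hm2 π ε 0 = 0 := by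
  simp [mkFun]

lemma mkFun_ne_zero (π : Perm (Fin m)) (ε : Fin m → Bool) {x : ZMod p} (hx : x ≠ 0) :
    mkFun hm hm2 π ε x ≠ 0 := by
  rw [mkFun, dif_neg hx]
  rcases Bool.eq_false_or_eq_true ((decide (x.val ≤ m)) == ε (idxF hm hm2 x)) with h | h <;>
    rw [h]
  · simpa using embF_ne_zero hm hm2 _
  · simpa using embF_ne_zero hm hm2 _

lemma mkFun_inv (π : Perm (Fin m)) (ε : Fin m → Bool) (x : ZMod p) :
    mkFun hm hm2 π⁻¹ (fun j => ε (π⁻¹ j)) (mkFun hm hm2 π ε x) = x := by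
  by_cases hx : x = 0
  · rw [hx, mkFun_zero, mkFun_zero]
  set i := idxF hm hm2 x with hi
  have hembne : embF (p := p) (π i) ≠ 0 := embF_ne_zero hm hm2 (π i)
  have hembsgn : (embF (p := p) (π i)).val ≤ m := sgn_embF hm hm2 (π i)
  have hnegsgn : ¬ ((-embF (p := p) (π i)).val ≤ m) :=
    fun h => ((sgn_neg hm hm2 hembne).1 h) hembsgn
  by_cases hb : x.val ≤ m <;> by_cases hc : ε i = true
  · -- y = embF (π i), lands on embF i = x
    have hy : mkFun hm hm2 π ε x = embF (π i) := by
      rw [mkFun, dif_neg hx, ← hi, hc, decide_eq_true hb]; rfl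
    rw [hy, mkFun, dif_neg hembne, idxF_embF hm hm2, decide_eq_true hembsgn,
      Equiv.Perm.inv_def, Equiv.symm_apply_apply, hc]
    simpa using (repr_pos hm hm2 hx hb)
  · -- b true, c false : y = -embF (π i)
    have hc' : ε i = false := by simpa using hc
    have hy : mkFun hm hm2 π ε x = -embF (π i) := by
      rw [mkFun, dif_neg hx, ← hi, hc', decide_eq_true hb]; rfl
    rw [hy, mkFun, dif_neg (neg_ne_zero.2 hembne), idxF_neg hm hm2 hembne,
      idxF_embF hm hm2, decide_eq_false hnegsgn, Equiv.Perm.inv_def, Equiv.symm_apply_apply, hc']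
    simpa using (repr_pos hm hm2 hx hb)
  · -- b false, c true : y = -embF (π i)
    have hy : mkFun hm hm2 π ε x = -embF (π i) := by
      rw [mkFun, dif_neg hx, ← hi, hc, decide_eq_false hb]; rfl
    rw [hy, mkFun, dif_neg (neg_ne_zero.2 hembne), idxF_neg hm hm2 hembne,
      idxF_embF hm hm2, decide_eq_false hnegsgn, Equiv.Perm.inv_def, Equiv.symm_apply_apply, hc]
    have := repr_neg hm hm2 hx hb
    simp [hi, this]
  · -- b false, c false : y = embF (π i)
    have hc' : ε i = false := by simpa using hc
    have hy : mkFun hm hm2 π ε x = embF (π i) := by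
      rw [mkFun, dif_neg hx, ← hi, hc', decide_eq_false hb]; rfl
    rw [hy, mkFun, dif_neg hembne, idxF_embF hm hm2, decide_eq_true hembsgn,
      Equiv.Perm.inv_def, Equiv.symm_apply_apply, hc']
    have := repr_neg hm hm2 hx hb
    simp [hi, this]

end Part6
section Part7

open Equiv Equiv.Perm

lemma ofBijective_apply' {α β : Type*} (f : α → β) (hf : Function.Bijective f) (a : α) :
    Equiv.ofBijective f hf a = f a := rfl

variable {p : ℕ} [NeZero p] [Fact p.Prime] {m : ℕ}

variable (hm : p = 2 * m + 1) (hm2 : 2 ≤ m)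
include hm hm2

lemma embF_inj : Function.Injective (embF (p := p) (m := m)) := by
  intro i j h
  have hi := embF_val (p := p) hm hm2 i
  have hj := embF_val (p := p) hm hm2 j
  rw [h] at hi
  apply Fin.ext
  omega

lemma mkFun_neg (π : Perm (Fin m)) (ε : Fin m → Bool) (x : ZMod p) :
    mkFun hm hm2 π ε (-x) = - mkFun hm hm2 π ε x := by
  by_cases hx : x = 0
  · simp [hx, mkFun_zero]
  have hnx : (-x : ZMod p) ≠ 0 := neg_ne_zero.2 hx
  have hsgn := sgn_neg hm hm2 hx
  have hd : decide ((-x).val ≤ m) = ! decide (x.val ≤ m) := by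
    by_cases hb : x.val ≤ m
    · rw [decide_eq_false (fun h => (hsgn.1 h) hb), decide_eq_true hb]; rfl
    · rw [decide_eq_true (hsgn.2 hb), decide_eq_false hb]; rfl
  rw [mkFun, mkFun, dif_neg hx, dif_neg hnx, idxF_neg hm hm2 hx, hd]
  cases hdb : decide (x.val ≤ m) <;> cases hdc : ε (idxF hm hm2 x) <;> simp

/-- the signed-pair permutation -/
def mkPerm (π : Perm (Fin m)) (ε : Fin m → Bool) : Perm (ZMod p) where
  toFun := mkFun hm hm2 π ε
  invFun := mkFun hm hm2 π⁻¹ (fun j => ε (π⁻¹ j))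
  left_inv x := mkFun_inv hm hm2 π ε x
  right_inv y := by
    have h := mkFun_inv hm hm2 π⁻¹ (fun j => ε (π⁻¹ j)) y
    simpa using h

lemma mkPerm_apply (π : Perm (Fin m)) (ε : Fin m → Bool) (x : ZMod p) :
    mkPerm hm hm2 π ε x = mkFun hm hm2 π ε x := rfl

/-- odd permutations fixing `0` are parametrized by a pair permutation and signs -/
noncomputable def oddEquiv :
    {f : Perm (ZMod p) // f 0 = 0 ∧ ∀ x, f (-x) = -f x} ≃
      Perm (Fin m) × (Fin m → Bool) where
  toFun f := by
    refine ⟨Equiv.ofBijective (fun i => idxF hm hm2 (f.1 (embF i)))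
      (Finite.injective_iff_bijective.1 ?_), fun i => decide ((f.1 (embF i)).val ≤ m)⟩
    intro i j hij
    obtain ⟨f, hf0, hodd⟩ := f
    simp only at hij
    have hnei : f (embF i) ≠ 0 := by
      intro h
      exact embF_ne_zero hm hm2 i (f.injective (h.trans hf0.symm))
    have hnej : f (embF j) ≠ 0 := by
      intro h
      exact embF_ne_zero hm hm2 j (f.injective (h.trans hf0.symm))
    have contra : f (embF i) = - f (embF j) → i = j := by
      intro h
      exfalso
      rw [← hodd] at h
      have he : embF (p := p) i = -embF (p := p) j := f.injective h
      have hsg := sgn_embF hm hm2 (p := p) i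
      rw [he] at hsg
      exact (sgn_neg hm hm2 (embF_ne_zero hm hm2 j)).1 hsg (sgn_embF hm hm2 j)
    rcases repr_cases hm hm2 hnei with h1 | h1 <;> rcases repr_cases hm hm2 hnej with h2 | h2
    · exact embF_inj hm hm2 (f.injective (by rw [h1, h2, hij]))
    · exact contra (by rw [h1, h2, neg_neg, hij])
    · exact contra (by rw [h1, h2, hij])
    · exact embF_inj hm hm2 (f.injective (by rw [h1, h2, hij]))
  invFun x := ⟨mkPerm hm hm2 x.1 x.2, mkFun_zero hm hm2 _ _, mkFun_neg hm hm2 _ _⟩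
  left_inv f := by
    obtain ⟨f, hf0, hodd⟩ := f
    refine Subtype.ext (Equiv.ext fun x => ?_)
    simp only [mkPerm_apply]
    by_cases hx : x = 0
    · rw [hx, mkFun_zero, hf0]
    have hfx : f x ≠ 0 := fun h => hx (f.injective (h.trans hf0.symm))
    rw [mkFun, dif_neg hx]
    simp only [ofBijective_apply']
    by_cases hb : x.val ≤ m
    · have hxe : embF (idxF hm hm2 x) = x := repr_pos hm hm2 hx hb
      rw [decide_eq_true hb, hxe]
      by_cases hc : (f x).val ≤ m
      · rw [decide_eq_true hc]
        simpa using repr_pos hm hm2 hfx hc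
      · rw [decide_eq_false hc]
        have hr := repr_neg hm hm2 hfx hc
        simp [hr]
    · have hxe : embF (idxF hm hm2 x) = -x := repr_neg hm hm2 hx hb
      have hfe : f (embF (idxF hm hm2 x)) = - f x := by rw [hxe, hodd]
      rw [decide_eq_false hb, hfe]
      have hidx : idxF hm hm2 (-(f x)) = idxF hm hm2 (f x) := idxF_neg hm hm2 hfx
      by_cases hc : (f x).val ≤ m
      · have hcc : ¬ ((-(f x)).val ≤ m) := fun h => (sgn_neg hm hm2 hfx).1 h hc
        rw [decide_eq_false hcc, hidx]
        simpa using repr_pos hm hm2 hfx hc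
      · have hcc : (-(f x)).val ≤ m := (sgn_neg hm hm2 hfx).2 hc
        rw [decide_eq_true hcc, hidx]
        have hr := repr_neg hm hm2 hfx hc
        simp [hr]
  right_inv x := by
    obtain ⟨π, ε⟩ := x
    have key : ∀ i : Fin m, (mkPerm hm hm2 π ε) (embF i) =
        cond (ε i) (embF (π i)) (-embF (π i)) := by
      intro i
      rw [mkPerm_apply, mkFun, dif_neg (embF_ne_zero hm hm2 i), idxF_embF hm hm2,
        decide_eq_true (sgn_embF hm hm2 i)]
      cases ε i <;> rfl
    have hpi : ∀ i, idxF hm hm2 ((mkPerm hm hm2 π ε) (embF i)) = π i := by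
      intro i
      rw [key i]
      cases hc : ε i
      · simp only [Bool.cond_false]
        rw [idxF_neg hm hm2 (embF_ne_zero hm hm2 _), idxF_embF hm hm2]
      · simp only [Bool.cond_true]
        rw [idxF_embF hm hm2]
    refine Prod.ext ?_ ?_
    · exact Equiv.ext fun i => by rw [ofBijective_apply']; exact hpi i
    · funext i
      simp only
      rw [key i]
      cases hc : ε i
      · simp only [Bool.cond_false]
        exact decide_eq_false fun h =>
          (sgn_neg hm hm2 (embF_ne_zero hm hm2 _)).1 h (sgn_embF hm hm2 _)
      · simp only [Bool.cond_true]
        exact decide_eq_true (sgn_embF hm hm2 _)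

lemma card_oddStab :
    Nat.card {f : Perm (ZMod p) // f 0 = 0 ∧ ∀ x, f (-x) = -f x} =
      m.factorial * 2 ^ m := by
  rw [Nat.card_congr (oddEquiv hm hm2), Nat.card_prod, Nat.card_eq_fintype_card,
    Nat.card_eq_fintype_card, Fintype.card_perm, Fintype.card_fun]
  simp [Fintype.card_fin, Fintype.card_bool]

end Part7
section Part8

open Equiv Equiv.Perm

variable {p : ℕ} [NeZero p] [Fact p.Prime]

lemma comm_refl_iff_odd (f : Perm (ZMod p)) :
    reflAt p 0 * f = f * reflAt p 0 ↔ ∀ x, f (-x) = -f x := by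
  constructor
  · intro h x
    have := congrArg (fun g : Perm (ZMod p) => g x) h
    simp only [Equiv.Perm.mul_apply, reflAt_apply, zero_sub] at this
    exact this.symm
  · intro h
    ext x
    simp only [Equiv.Perm.mul_apply, reflAt_apply, zero_sub]
    exact (h x).symm

variable {m : ℕ} (hm : p = 2 * m + 1) (hm2 : 2 ≤ m)
include hm hm2

lemma hp5' : 5 ≤ p := by omega

lemma card_rev_zero :
    Nat.card {σ : HC p // reflAt p 0 * σ.1 * (reflAt p 0)⁻¹ = σ.1⁻¹} =
      m.factorial * 2 ^ m := by
  have hp5 : 5 ≤ p := hp5' hm hm2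
  have e1 : {σ : HC p // reflAt p 0 * σ.1 * (reflAt p 0)⁻¹ = σ.1⁻¹} ≃
      {f : {f : Perm (ZMod p) // f 0 = 0} //
        reflAt p 0 * f.1 = f.1 * reflAt p 0} := by
    refine Equiv.subtypeEquiv (hcParam (p := p)) fun σ => ?_
    set f := hcParam (p := p) σ with hf
    have hσ : σ.1 = f.1 * rot p 1 * f.1⁻¹ := by
      rw [hf]
      exact (toBase_conj σ.2).symm
    rw [hσ]
    exact refl_zero_reverses_iff hp5 f.2
  have e2 : {f : {f : Perm (ZMod p) // f 0 = 0} //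
        reflAt p 0 * f.1 = f.1 * reflAt p 0} ≃
      {f : Perm (ZMod p) // f 0 = 0 ∧ ∀ x, f (-x) = -f x} := by
    refine (Equiv.subtypeSubtypeEquivSubtypeInter
        (fun f : Perm (ZMod p) => f 0 = 0)
        (fun f => reflAt p 0 * f = f * reflAt p 0)).trans
      (Equiv.subtypeEquivRight fun f => ?_)
    rw [comm_refl_iff_odd]
  rw [Nat.card_congr (e1.trans e2), card_oddStab hm hm2]

/-- transport the reversal count from axis `0` to axis `s`. -/
noncomputable def conjHCEquiv (c : Perm (ZMod p)) (P Q : Perm (ZMod p) → Prop)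
    (hPQ : ∀ τ : Perm (ZMod p), P τ ↔ Q (c * τ * c⁻¹)) :
    {σ : HC p // P σ.1} ≃ {σ : HC p // Q σ.1} where
  toFun σ := ⟨⟨c * σ.1.1 * c⁻¹, σ.1.2.conj c⟩, (hPQ _).1 σ.2⟩
  invFun τ := ⟨⟨c⁻¹ * τ.1.1 * c, by simpa using τ.1.2.conj c⁻¹⟩, by
    apply (hPQ _).2
    have : c * (c⁻¹ * τ.1.1 * c) * c⁻¹ = τ.1.1 := by group
    rw [this]
    exact τ.2⟩
  left_inv σ := by
    refine Subtype.ext (Subtype.ext ?_)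
    show c⁻¹ * (c * σ.1.1 * c⁻¹) * c = σ.1.1
    group
  right_inv τ := by
    refine Subtype.ext (Subtype.ext ?_)
    show c * (c⁻¹ * τ.1.1 * c) * c⁻¹ = τ.1.1
    group

lemma card_rev (s : ZMod p) :
    Nat.card {σ : HC p // reflAt p s * σ.1 * (reflAt p s)⁻¹ = σ.1⁻¹} =
      m.factorial * 2 ^ m := by
  have hp5 : 5 ≤ p := hp5' hm hm2
  have h2 : (2 : ZMod p) ≠ 0 := hcTwoNeZero hp5
  set r : ZMod p := 2⁻¹ * s with hr
  have hrs : reflAt p s = rot p r * reflAt p 0 * (rot p r)⁻¹ := by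
    rw [rot_conj_reflAt, zero_add, hr]
    congr 1
    field_simp
  have key : ∀ τ : Perm (ZMod p),
      (reflAt p 0 * τ * (reflAt p 0)⁻¹ = τ⁻¹) ↔
      (reflAt p s * (rot p r * τ * (rot p r)⁻¹) * (reflAt p s)⁻¹ =
        (rot p r * τ * (rot p r)⁻¹)⁻¹) := by
    intro τ
    rw [hrs]
    constructor
    · intro h
      calc rot p r * reflAt p 0 * (rot p r)⁻¹ * (rot p r * τ * (rot p r)⁻¹) *
            (rot p r * reflAt p 0 * (rot p r)⁻¹)⁻¹
          = rot p r * (reflAt p 0 * τ * (reflAt p 0)⁻¹) * (rot p r)⁻¹ := by group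
        _ = rot p r * τ⁻¹ * (rot p r)⁻¹ := by rw [h]
        _ = (rot p r * τ * (rot p r)⁻¹)⁻¹ := by group
    · intro h
      have h' : rot p r * (reflAt p 0 * τ * (reflAt p 0)⁻¹) * (rot p r)⁻¹ =
          rot p r * τ⁻¹ * (rot p r)⁻¹ := by
        calc rot p r * (reflAt p 0 * τ * (reflAt p 0)⁻¹) * (rot p r)⁻¹
            = rot p r * reflAt p 0 * (rot p r)⁻¹ * (rot p r * τ * (rot p r)⁻¹) *
              (rot p r * reflAt p 0 * (rot p r)⁻¹)⁻¹ := by group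
          _ = (rot p r * τ * (rot p r)⁻¹)⁻¹ := h
          _ = rot p r * τ⁻¹ * (rot p r)⁻¹ := by group
      have := congrArg (fun z => (rot p r)⁻¹ * z * rot p r) h'
      simpa [mul_assoc] using this
  have e : {σ : HC p // reflAt p 0 * σ.1 * (reflAt p 0)⁻¹ = σ.1⁻¹} ≃
      {σ : HC p // reflAt p s * σ.1 * (reflAt p s)⁻¹ = σ.1⁻¹} :=
    conjHCEquiv (rot p r) (fun τ => reflAt p 0 * τ * (reflAt p 0)⁻¹ = τ⁻¹)
      (fun τ => reflAt p s * τ * (reflAt p s)⁻¹ = τ⁻¹) key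
  rw [← Nat.card_congr e, card_rev_zero hm hm2]

end Part8
section Part9

open Equiv Equiv.Perm

lemma nat_card_sigma {ι : Type*} [Fintype ι] (f : ι → Type*) [∀ i, Finite (f i)] :
    Nat.card (Σ i, f i) = ∑ i, Nat.card (f i) := by
  letI : ∀ i, Fintype (f i) := fun i => Fintype.ofFinite _
  rw [Nat.card_eq_fintype_card, Fintype.card_sigma]
  exact Finset.sum_congr rfl fun i _ => (Nat.card_eq_fintype_card).symm

variable {p : ℕ} [NeZero p] [Fact p.Prime]

instance : Finite (HC p) := by unfold HC; infer_instance

/-- `τ` is a rotation -/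
def IsRotP (p : ℕ) [NeZero p] (τ : Perm (ZMod p)) : Prop := ∃ r : ZMod p, τ = rot p r

lemma refl_conj_rot_eq_inv (s r : ZMod p) :
    reflAt p s * rot p r * (reflAt p s)⁻¹ = (rot p r)⁻¹ := by
  rw [reflAt_conj_rot, rot_neg]

lemma isRotP_rev (s : ZMod p) {τ : Perm (ZMod p)} (h : IsRotP p τ) :
    reflAt p s * τ * (reflAt p s)⁻¹ = τ⁻¹ := by
  obtain ⟨r, rfl⟩ := h
  exact refl_conj_rot_eq_inv s r

noncomputable def rotsEquiv : {σ : HC p // IsRotP p σ.1} ≃ {r : ZMod p // r ≠ 0} where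
  toFun σ := ⟨σ.1.1 0, by
    have : (0 : ZMod p) ∈ σ.1.1.support := σ.1.2.2 ▸ Finset.mem_univ _
    exact Equiv.Perm.mem_support.1 this⟩
  invFun r := ⟨⟨rot p r.1, isHC_rot r.2⟩, ⟨r.1, rfl⟩⟩
  left_inv σ := by
    obtain ⟨σ', r, hr⟩ := σ
    refine Subtype.ext (Subtype.ext ?_)
    show rot p (σ'.1 0) = σ'.1
    rw [hr]
    congr 1
    simp [rot_apply]
  right_inv r := by
    refine Subtype.ext ?_
    show rot p r.1 0 = r.1
    simp [rot_apply]

lemma card_rots : Nat.card {σ : HC p // IsRotP p σ.1} = p - 1 := by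
  rw [Nat.card_congr (rotsEquiv (p := p)), Nat.card_eq_fintype_card]
  have h := Fintype.card_subtype_compl (fun r : ZMod p => r = 0)
  rw [h, ZMod.card, Fintype.card_subtype_eq]

/-- uniqueness of the axis of a non-rotation Hamiltonian cycle -/
lemma axis_unique (hp5 : 5 ≤ p) {σ : Perm (ZMod p)} (hσ : IsHC p σ)
    (hnr : ¬ IsRotP p σ) {s t : ZMod p}
    (hs : reflAt p s * σ * (reflAt p s)⁻¹ = σ⁻¹)
    (ht : reflAt p t * σ * (reflAt p t)⁻¹ = σ⁻¹) : s = t := by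
  have hc : (reflAt p s * reflAt p t) * σ * (reflAt p s * reflAt p t)⁻¹ = σ := by
    calc (reflAt p s * reflAt p t) * σ * (reflAt p s * reflAt p t)⁻¹
        = reflAt p s * (reflAt p t * σ * (reflAt p t)⁻¹) * (reflAt p s)⁻¹ := by group
      _ = reflAt p s * σ⁻¹ * (reflAt p s)⁻¹ := by rw [ht]
      _ = (reflAt p s * σ * (reflAt p s)⁻¹)⁻¹ := by group
      _ = σ := by rw [hs, inv_inv]
  have hrot : reflAt p s * reflAt p t = rot p (s - t) := by
    ext x
    simp only [Equiv.Perm.mul_apply, reflAt_apply, rot_apply]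
    ring
  rw [hrot] at hc
  by_cases hst : s - t = 0
  · exact sub_eq_zero.1 hst
  · exfalso
    apply hnr
    have hcomm : rot p (s - t) * σ = σ * rot p (s - t) := by
      have := congrArg (fun z => z * rot p (s - t)) hc
      simpa [mul_assoc] using this
    exact ⟨σ 0, eq_rot_of_commute hst hcomm⟩

lemma fixedBy_reflAt_iff (hp5 : 5 ≤ p) {σ : Perm (ZMod p)} (hσ : IsHC p σ) (s : ZMod p) :
    FixedBy p (reflAt p s) σ ↔ reflAt p s * σ * (reflAt p s)⁻¹ = σ⁻¹ :=
  ⟨fun h => h.resolve_left (no_refl_commute hp5 hσ s), Or.inr⟩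

end Part9
section Part10

open Equiv Equiv.Perm

variable {p : ℕ} [NeZero p] [Fact p.Prime] {m : ℕ} (hm : p = 2 * m + 1) (hm2 : 2 ≤ m)
include hm hm2

lemma card_rev_split (s : ZMod p) :
    m.factorial * 2 ^ m = (p - 1) +
      Nat.card {σ : HC p // ¬ IsRotP p σ.1 ∧
        reflAt p s * σ.1 * (reflAt p s)⁻¹ = σ.1⁻¹} := by
  classical
  rw [← card_rev hm hm2 s, ← card_rots]
  have e1 : {τ : {σ : HC p // reflAt p s * σ.1 * (reflAt p s)⁻¹ = σ.1⁻¹} //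
      IsRotP p τ.1.1} ≃ {σ : HC p // IsRotP p σ.1} :=
    (Equiv.subtypeSubtypeEquivSubtypeInter
      (fun σ : HC p => reflAt p s * σ.1 * (reflAt p s)⁻¹ = σ.1⁻¹)
      (fun σ : HC p => IsRotP p σ.1)).trans
    (Equiv.subtypeEquivRight fun σ =>
      ⟨And.right, fun h => ⟨isRotP_rev s h, h⟩⟩)
  have e2 : {τ : {σ : HC p // reflAt p s * σ.1 * (reflAt p s)⁻¹ = σ.1⁻¹} //
      ¬ IsRotP p τ.1.1} ≃ {σ : HC p // ¬ IsRotP p σ.1 ∧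
        reflAt p s * σ.1 * (reflAt p s)⁻¹ = σ.1⁻¹} :=
    (Equiv.subtypeSubtypeEquivSubtypeInter
      (fun σ : HC p => reflAt p s * σ.1 * (reflAt p s)⁻¹ = σ.1⁻¹)
      (fun σ : HC p => ¬ IsRotP p σ.1)).trans
    (Equiv.subtypeEquivRight fun σ => and_comm)
  have e : {σ : HC p // reflAt p s * σ.1 * (reflAt p s)⁻¹ = σ.1⁻¹} ≃
      {σ : HC p // IsRotP p σ.1} ⊕ {σ : HC p // ¬ IsRotP p σ.1 ∧
        reflAt p s * σ.1 * (reflAt p s)⁻¹ = σ.1⁻¹} :=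
    (Equiv.sumCompl (fun τ : {σ : HC p //
      reflAt p s * σ.1 * (reflAt p s)⁻¹ = σ.1⁻¹} => IsRotP p τ.1.1)).symm.trans
    (Equiv.sumCongr e1 e2)
  rw [Nat.card_congr e, Nat.card_sum]

lemma card_sym :
    Nat.card {σ : HC p // ∃ s, FixedBy p (reflAt p s) σ.1} + p * (p - 1) =
      (p - 1) + p * (m.factorial * 2 ^ m) := by
  classical
  have hp5 : 5 ≤ p := hp5' hm hm2
  set Φ : ({σ : HC p // IsRotP p σ.1} ⊕
      Σ s : ZMod p, {σ : HC p // ¬ IsRotP p σ.1 ∧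
        reflAt p s * σ.1 * (reflAt p s)⁻¹ = σ.1⁻¹}) →
      {σ : HC p // ∃ s, FixedBy p (reflAt p s) σ.1} :=
    fun x => match x with
    | .inl σ => ⟨σ.1, ⟨0, Or.inr (isRotP_rev 0 σ.2)⟩⟩
    | .inr ⟨s, σ⟩ => ⟨σ.1, ⟨s, Or.inr σ.2.2⟩⟩ with hΦ
  have hinj : Function.Injective Φ := by
    intro a b h
    have hval : ∀ x, (Φ x).1.1 = (match x with
      | .inl σ => σ.1.1
      | .inr ⟨_, σ⟩ => σ.1.1) := by
      intro x; rcases x with σ | ⟨s, σ⟩ <;> rfl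
    rcases a with σ | ⟨s, σ⟩ <;> rcases b with τ | ⟨t, τ⟩
    · have : σ.1.1 = τ.1.1 := by
        have := congrArg (fun z => z.1.1) h; simpa [hΦ] using this
      exact congrArg Sum.inl (Subtype.ext (Subtype.ext this))
    · exfalso
      have heq : σ.1.1 = τ.1.1 := by
        have := congrArg (fun z => z.1.1) h; simpa [hΦ] using this
      exact τ.2.1 (heq ▸ σ.2)
    · exfalso
      have heq : σ.1.1 = τ.1.1 := by
        have := congrArg (fun z => z.1.1) h; simpa [hΦ] using this
      exact σ.2.1 (heq.symm ▸ τ.2)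
    · have heq : σ.1.1 = τ.1.1 := by
        have := congrArg (fun z => z.1.1) h; simpa [hΦ] using this
      have hst : s = t := by
        refine axis_unique hp5 σ.1.2 σ.2.1 σ.2.2 ?_
        rw [heq]; exact τ.2.2
      subst hst
      exact congrArg Sum.inr (congrArg (Sigma.mk s) (Subtype.ext (Subtype.ext heq)))
  have hsurj : Function.Surjective Φ := by
    rintro ⟨σ, s, hfix⟩
    have hrev := (fixedBy_reflAt_iff hp5 σ.2 s).1 hfix
    by_cases hr : IsRotP p σ.1
    · exact ⟨.inl ⟨σ, hr⟩, Subtype.ext rfl⟩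
    · exact ⟨.inr ⟨s, σ, hr, hrev⟩, Subtype.ext rfl⟩
  have hcard := Nat.card_congr (Equiv.ofBijective Φ ⟨hinj, hsurj⟩)
  rw [Nat.card_sum, nat_card_sigma, card_rots] at hcard
  rw [← hcard]
  have hsum : ∀ s : ZMod p, (p-1) + Nat.card {σ : HC p // ¬ IsRotP p σ.1 ∧
      reflAt p s * σ.1 * (reflAt p s)⁻¹ = σ.1⁻¹} = m.factorial * 2 ^ m :=
    fun s => (card_rev_split hm hm2 s).symm
  have : p * (m.factorial * 2 ^ m) = ∑ s : ZMod p, ((p-1) + Nat.card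
      {σ : HC p // ¬ IsRotP p σ.1 ∧ reflAt p s * σ.1 * (reflAt p s)⁻¹ = σ.1⁻¹}) := by
    rw [Finset.sum_congr rfl (fun s _ => hsum s), Finset.sum_const, Finset.card_univ,
      ZMod.card, smul_eq_mul]
  rw [this, Finset.sum_add_distrib, Finset.sum_const, Finset.card_univ, ZMod.card,
    smul_eq_mul]
  ring
end Part10
section Part11

open Equiv Equiv.Perm

variable {p : ℕ} [NeZero p] [Fact p.Prime]

lemma isHC_zpow_units {σ : Perm (ZMod p)} (h : IsHC p σ) (u : ℤˣ) :
    IsHC p (σ ^ (u : ℤ)) := by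
  rcases Int.units_eq_one_or u with hu | hu <;> rw [hu]
  · rw [Units.val_one, zpow_one]; exact h
  · rw [Units.val_neg, Units.val_one, zpow_neg, zpow_one]; exact h.inv

/-- the action of `ZMod p × {±1}` on Hamiltonian cycles -/
def actHC (g : Multiplicative (ZMod p) × ℤˣ) (σ : HC p) : HC p :=
  ⟨rotAct p (Multiplicative.toAdd g.1) (σ.1 ^ (g.2 : ℤ)),
    isHC_rotAct (isHC_zpow_units σ.2 g.2) _⟩

lemma actHC_val (g : Multiplicative (ZMod p) × ℤˣ) (σ : HC p) :
    (actHC g σ).1 = rotAct p (Multiplicative.toAdd g.1) (σ.1 ^ (g.2 : ℤ)) := rfl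

lemma rotAct_zpow_units (r : ZMod p) (τ : Perm (ZMod p)) (u : ℤˣ) :
    (rotAct p r τ) ^ (u : ℤ) = rotAct p r (τ ^ (u : ℤ)) := by
  rcases Int.units_eq_one_or u with hu | hu <;> rw [hu]
  · rw [Units.val_one, zpow_one, zpow_one]
  · rw [Units.val_neg, Units.val_one, zpow_neg, zpow_one, zpow_neg, zpow_one, rotAct_inv]

lemma actHC_one (σ : HC p) : actHC 1 σ = σ := by
  refine Subtype.ext ?_
  rw [actHC_val]
  simp only [Prod.fst_one, Prod.snd_one, Units.val_one, zpow_one]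
  rw [show Multiplicative.toAdd (1 : Multiplicative (ZMod p)) = 0 from rfl, rotAct_zero]

lemma actHC_comp (g h : Multiplicative (ZMod p) × ℤˣ) (σ : HC p) :
    actHC g (actHC h σ) = actHC (g * h) σ := by
  refine Subtype.ext ?_
  rw [actHC_val, actHC_val, actHC_val]
  rw [rotAct_zpow_units, rotAct_rotAct, ← zpow_mul]
  have h1 : Multiplicative.toAdd (g.1 * h.1) =
      Multiplicative.toAdd g.1 + Multiplicative.toAdd h.1 := rfl
  have h2 : ((g.2 * h.2 : ℤˣ) : ℤ) = (h.2 : ℤ) * (g.2 : ℤ) := by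
    rw [Units.val_mul]; ring
  rw [Prod.fst_mul, Prod.snd_mul, h1, h2]

lemma rel_iff_act (σ τ : HC p) :
    (rotSetoid p).r σ τ ↔ ∃ g, actHC g σ = τ := by
  constructor
  · rintro ⟨r, h | h⟩
    · refine ⟨(Multiplicative.ofAdd r, 1), Subtype.ext ?_⟩
      rw [actHC_val]
      simp only [Units.val_one, zpow_one]
      exact h.symm
    · refine ⟨(Multiplicative.ofAdd r, -1), Subtype.ext ?_⟩
      rw [actHC_val]
      simp only [Units.val_neg, Units.val_one, zpow_neg, zpow_one]
      rw [← rotAct_inv]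
      exact h.symm
  · rintro ⟨⟨a, u⟩, hg⟩
    refine ⟨Multiplicative.toAdd a, ?_⟩
    rcases Int.units_eq_one_or u with hu | hu <;> subst hu
    · left
      rw [← hg, actHC_val]
      simp only [Units.val_one, zpow_one]
    · right
      rw [← hg, actHC_val]
      simp [rotAct_inv]

lemma actHC_free (hp5 : 5 ≤ p) {σ : HC p}
    (hasym : ∀ s : ZMod p, ¬ FixedBy p (reflAt p s) σ.1)
    {g : Multiplicative (ZMod p) × ℤˣ} (hg : actHC g σ = σ) : g = 1 := by
  obtain ⟨a, u⟩ := g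
  have hval := congrArg Subtype.val hg
  rw [actHC_val] at hval
  rcases Int.units_eq_one_or u with hu | hu <;> subst hu
  · simp only [Units.val_one, zpow_one] at hval
    -- rotAct a σ = σ
    by_cases ha : Multiplicative.toAdd a = (0 : ZMod p)
    · have : a = 1 := by
        have := congrArg Multiplicative.ofAdd ha
        simpa using this
      rw [this]
      rfl
    · exfalso
      have hcomm : rot p (Multiplicative.toAdd a) * σ.1 =
          σ.1 * rot p (Multiplicative.toAdd a) := by
        have := congrArg (fun z => z * rot p (Multiplicative.toAdd a)) hval
        simpa [rotAct, mul_assoc] using this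
      have hrot : IsRotP p σ.1 := ⟨σ.1 0, eq_rot_of_commute ha hcomm⟩
      exact hasym 0 (Or.inr (isRotP_rev 0 hrot))
  · exfalso
    simp only [Units.val_neg, Units.val_one, zpow_neg, zpow_one] at hval
    have : rotAct p (Multiplicative.toAdd a) σ.1 = σ.1⁻¹ := by
      rw [← rotAct_inv] at hval
      have h3 := congrArg (·⁻¹) hval
      simpa using h3
    exact no_rot_reversal hp5 σ.2 _ this

lemma fixedBy_inv {g τ : Perm (ZMod p)} (h : FixedBy p g τ⁻¹) : FixedBy p g τ := by
  rcases h with h | h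
  · left
    have := congrArg (·⁻¹) h
    simpa [mul_inv_rev, mul_assoc] using this
  · right
    rw [inv_inv] at h
    have := congrArg (·⁻¹) h
    simpa [mul_inv_rev, mul_assoc] using this

lemma fixedBy_transfer {σ τ : Perm (ZMod p)} {r s : ZMod p}
    (h : τ = rotAct p r σ ∨ τ = (rotAct p r σ)⁻¹)
    (hf : FixedBy p (reflAt p s) τ) : FixedBy p (reflAt p (s - 2*r)) σ := by
  have hmain : FixedBy p (reflAt p s) (rotAct p r σ) := by
    rcases h with h | h
    · rwa [h] at hf
    · exact fixedBy_inv (by rwa [h] at hf)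
  have hconj : reflAt p (s - 2*r) = (rot p r)⁻¹ * reflAt p s * rot p r := by
    have h2 := rot_conj_reflAt (p := p) (-r) s
    rw [rot_neg, inv_inv] at h2
    rw [show s - 2*r = s + 2 * (-r) by ring, ← h2]
  rcases hmain with h | h
  · left
    rw [hconj]
    unfold rotAct at h
    calc (rot p r)⁻¹ * reflAt p s * rot p r * σ * ((rot p r)⁻¹ * reflAt p s * rot p r)⁻¹
        = (rot p r)⁻¹ * (reflAt p s * (rot p r * σ * (rot p r)⁻¹) * (reflAt p s)⁻¹) *
          rot p r := by group
      _ = (rot p r)⁻¹ * (rot p r * σ * (rot p r)⁻¹) * rot p r := by rw [h]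
      _ = σ := by group
  · right
    rw [hconj]
    unfold rotAct at h
    calc (rot p r)⁻¹ * reflAt p s * rot p r * σ * ((rot p r)⁻¹ * reflAt p s * rot p r)⁻¹
        = (rot p r)⁻¹ * (reflAt p s * (rot p r * σ * (rot p r)⁻¹) * (reflAt p s)⁻¹) *
          rot p r := by group
      _ = (rot p r)⁻¹ * (rot p r * σ * (rot p r)⁻¹)⁻¹ * rot p r := by rw [h]
      _ = σ⁻¹ := by group

lemma asym_invariant {σ τ : HC p} (hrel : (rotSetoid p).r σ τ)
    (hasym : ∀ s : ZMod p, ¬ FixedBy p (reflAt p s) σ.1) :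
    ∀ s : ZMod p, ¬ FixedBy p (reflAt p s) τ.1 := by
  intro s hf
  obtain ⟨r, h⟩ := hrel
  exact hasym (s - 2*r) (fixedBy_transfer h hf)

end Part11
section Part12

open Equiv Equiv.Perm

variable {p : ℕ} [NeZero p] [Fact p.Prime]

instance : Finite (RotClasses p) := by unfold RotClasses; exact Quotient.finite _

lemma card_asym_orbits (hp5 : 5 ≤ p) :
    Nat.card {σ : HC p // ∀ s : ZMod p, ¬ FixedBy p (reflAt p s) σ.1} =
      (2 * p) * Nat.card {q : RotClasses p // ∃ σ : HC p,
        Quotient.mk (rotSetoid p) σ = q ∧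
        ∀ s : ZMod p, ¬ FixedBy p (reflAt p s) σ.1} := by
  classical
  set P : RotClasses p → Prop := fun q => ∃ σ : HC p,
    Quotient.mk (rotSetoid p) σ = q ∧ ∀ s : ZMod p, ¬ FixedBy p (reflAt p s) σ.1 with hP
  have hout : ∀ q : {q : RotClasses p // P q}, ∀ s : ZMod p,
      ¬ FixedBy p (reflAt p s) (Quotient.out (q.1 : Quotient (rotSetoid p))).1 := by
    rintro ⟨q, σ, hσq, hasym⟩
    have hrel : (rotSetoid p).r σ (Quotient.out (q : Quotient (rotSetoid p))) := by
      apply Quotient.exact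
      exact hσq.trans (Quotient.out_eq (s := rotSetoid p) q).symm
    exact asym_invariant hrel hasym
  set Ψ : {q : RotClasses p // P q} × (Multiplicative (ZMod p) × ℤˣ) →
      {σ : HC p // ∀ s : ZMod p, ¬ FixedBy p (reflAt p s) σ.1} :=
    fun x => ⟨actHC x.2 (Quotient.out (x.1.1 : Quotient (rotSetoid p))), by
      apply asym_invariant (σ := Quotient.out (x.1.1 : Quotient (rotSetoid p)))
      · exact (rel_iff_act _ _).2 ⟨x.2, rfl⟩
      · exact hout x.1⟩ with hΨ
  have hinj : Function.Injective Ψ := by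
    rintro ⟨q, g⟩ ⟨q', g'⟩ h
    have hv : actHC g (Quotient.out (q.1 : Quotient (rotSetoid p))) =
        actHC g' (Quotient.out (q'.1 : Quotient (rotSetoid p))) := congrArg Subtype.val h
    have hrel : (rotSetoid p).r (Quotient.out (q.1 : Quotient (rotSetoid p)))
        (Quotient.out (q'.1 : Quotient (rotSetoid p))) := by
      have r1 : (rotSetoid p).r (Quotient.out (q.1 : Quotient (rotSetoid p)))
          (actHC g (Quotient.out (q.1 : Quotient (rotSetoid p)))) :=
        (rel_iff_act _ _).2 ⟨g, rfl⟩
      have r2 : (rotSetoid p).r (Quotient.out (q'.1 : Quotient (rotSetoid p)))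
          (actHC g' (Quotient.out (q'.1 : Quotient (rotSetoid p)))) :=
        (rel_iff_act _ _).2 ⟨g', rfl⟩
      exact (rotSetoid p).iseqv.trans r1 (hv ▸ (rotSetoid p).iseqv.symm r2)
    have hq : q = q' := by
      refine Subtype.ext ?_
      have := Quotient.sound hrel
      exact (Quotient.out_eq (s := rotSetoid p) q.1).symm.trans (this.trans (Quotient.out_eq (s := rotSetoid p) q'.1))
    subst hq
    have hgg : actHC (g'⁻¹ * g) (Quotient.out (q.1 : Quotient (rotSetoid p))) =
        Quotient.out (q.1 : Quotient (rotSetoid p)) := by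
      rw [← actHC_comp, hv, actHC_comp, inv_mul_cancel, actHC_one]
    have := actHC_free hp5 (hout q) hgg
    have hg : g = g' := by
      have h2 := congrArg (fun z => g' * z) this
      simpa [mul_assoc] using h2
    rw [hg]
  have hsurj : Function.Surjective Ψ := by
    rintro ⟨σ, hasym⟩
    set q : RotClasses p := Quotient.mk (rotSetoid p) σ with hq
    have hPq : P q := ⟨σ, rfl, hasym⟩
    have hrel : (rotSetoid p).r (Quotient.out (q : Quotient (rotSetoid p))) σ := by
      apply Quotient.exact
      rw [Quotient.out_eq]
    obtain ⟨g, hg⟩ := (rel_iff_act _ _).1 hrel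
    exact ⟨(⟨q, hPq⟩, g), Subtype.ext hg⟩
  have hcard := Nat.card_congr (Equiv.ofBijective Ψ ⟨hinj, hsurj⟩)
  rw [← hcard, Nat.card_prod, Nat.card_prod]
  have h1 : Nat.card (Multiplicative (ZMod p)) = p := by
    have h := Nat.card_eq_of_bijective _ (Multiplicative.toAdd (α := ZMod p)).bijective
    rw [h, Nat.card_eq_fintype_card, ZMod.card]
  have h2 : Nat.card ℤˣ = 2 := by
    rw [Nat.card_eq_fintype_card, Fintype.card_units_int]
  rw [h1, h2]
  ring

lemma card_split_sym :
    Nat.card {σ : HC p // ∀ s : ZMod p, ¬ FixedBy p (reflAt p s) σ.1} +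
      Nat.card {σ : HC p // ∃ s : ZMod p, FixedBy p (reflAt p s) σ.1} =
      (p - 1).factorial := by
  classical
  have e : {σ : HC p // ∃ s : ZMod p, FixedBy p (reflAt p s) σ.1} ⊕
      {σ : HC p // ¬ ∃ s : ZMod p, FixedBy p (reflAt p s) σ.1} ≃ HC p :=
    Equiv.sumCompl _
  have e2 : {σ : HC p // ¬ ∃ s : ZMod p, FixedBy p (reflAt p s) σ.1} ≃
      {σ : HC p // ∀ s : ZMod p, ¬ FixedBy p (reflAt p s) σ.1} :=
    Equiv.subtypeEquivRight fun σ => not_exists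
  have := Nat.card_congr e
  rw [Nat.card_sum, Nat.card_congr e2, card_hc] at this
  omega

end Part12
section Part13

theorem stmt7' (p : ℕ) [Fact p.Prime] (hp : 5 ≤ p) :
    Nat.card {q : RotClasses p // ∃ σ : HC p, Quotient.mk (rotSetoid p) σ = q ∧
        ∀ s : ZMod p, ¬ FixedBy p (reflAt p s) σ.1}
      = ((p - 1) ^ 2 + Nat.factorial (p - 1)
          - p * (p - 1) * 2 ^ ((p - 3) / 2) * Nat.factorial ((p - 3) / 2)) / (2 * p) := by
  have podd : Odd p := (Fact.out : p.Prime).odd_of_ne_two (by omega)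
  obtain ⟨m', hm'⟩ := podd
  obtain ⟨m, hm, hm2⟩ : ∃ m, p = 2 * m + 1 ∧ 2 ≤ m := ⟨m', by omega, by omega⟩
  have hk : (p - 3) / 2 = m - 1 := by omega
  have hnum : p * (p - 1) * 2 ^ ((p - 3) / 2) * Nat.factorial ((p - 3) / 2) =
      p * (m.factorial * 2 ^ m) := by
    rw [hk]
    obtain ⟨mm, hmm⟩ : ∃ mm, m = mm + 1 := ⟨m - 1, by omega⟩
    subst hmm
    rw [show mm + 1 - 1 = mm from rfl, show p - 1 = 2 * (mm + 1) by omega,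
      Nat.factorial_succ, pow_succ]
    ring
  have hX := card_asym_orbits (p := p) hp
  have hsplit := card_split_sym (p := p)
  have hS := card_sym hm hm2
  have hQ : p * (p - 1) = (p - 1)^2 + (p - 1) := by
    rw [show p = (p - 1) + 1 by omega]
    rw [show (p - 1) + 1 - 1 = p - 1 from rfl]
    ring
  rw [hnum]
  set A := Nat.card {q : RotClasses p // ∃ σ : HC p,
    Quotient.mk (rotSetoid p) σ = q ∧
    ∀ s : ZMod p, ¬ FixedBy p (reflAt p s) σ.1} with hA
  set B := 2 * p * A with hB
  set C := p * (m.factorial * 2 ^ m) with hC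
  set Q := p * (p - 1) with hQdef
  have e1 : (p - 1)^2 + (p - 1).factorial - C = B := by omega
  rw [e1, hB]
  rw [Nat.mul_div_cancel_left A (show 0 < 2 * p by omega)]

end Part13

/-- the number of rotation classes of Hamiltonian cycles with no axis of
reflective symmetry equals
`((p-1)^2 + (p-1)! - p·(p-1)·2^((p-3)/2)·((p-3)/2)!) / (2p)`. -/
theorem stmt7 (p : ℕ) [Fact p.Prime] (hp : 5 ≤ p) :
    Nat.card {q : RotClasses p // ∃ σ : HC p, Quotient.mk (rotSetoid p) σ = q ∧
        ∀ s : ZMod p, ¬ FixedBy p (reflAt p s) σ.1}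
      = ((p - 1) ^ 2 + Nat.factorial (p - 1)
          - p * (p - 1) * 2 ^ ((p - 3) / 2) * Nat.factorial ((p - 3) / 2)) / (2 * p) := by
  exact stmt7' p hp
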